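/- arXiv:1201.0171 — 2 statements merged into one kernel-verified Lean document; each statement's English description precedes it below -/
import Mathlib

section
/- (Reduction 1) Let d ≥ 1. For any m ≥ 1 and even c₁, odd c₂ with 0 ≤ c₁, c₂ ≤ 2d-1, writing n = 1 + 2d·c₁ + (2d)²·c₂ + (2d)³·m, one has SG(n) = SG(c₁ + 2d·c₂ + (2d)²·m). -/
/-- mex of the two-element set {a, b}: the least natural number not in {a, b}. -/
def mex2 (a b : ℕ) : ℕ :=
  if 0 ≠ a ∧ 0 ≠ b then 0 else if 1 ≠ a ∧ 1 ≠ b then 1 else if 2 ≠ a ∧ 2 ≠ b then 2 else 3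

/-- The Sprague–Grundy sequence of the game G_{1,2d}: SG d 1 = 0 and
    SG d n = mex {SG d (n-1), SG d ⌈n/(2d)⌉} for n ≥ 2. -/
def SG (d : ℕ) : ℕ → ℕ
  | 0 => 0
  | 1 => 0
  | n + 2 => mex2 (SG d (n + 1)) (SG d ((n + 2 + (2 * d - 1)) / (2 * d)))
decreasing_by
  · omega
  · rcases Nat.eq_zero_or_pos d with h | h
    · simp [h]
    · have h2 : 0 < 2 * d := by omega
      rw [Nat.div_lt_iff_lt_mul h2]
      simp only [Nat.succ_eq_add_one]
      have h6 : (n + 1 + 1) * 2 ≤ (n + 1 + 1) * (2 * d) := Nat.mul_le_mul_left _ (by omega)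
      have h8 : 2 * (2 * d) ≤ (n + 1 + 1) * (2 * d) := Nat.mul_le_mul_right _ (by omega)
      omega

lemma mex2_ne_left (a b : ℕ) : mex2 a b ≠ a := by unfold mex2; split_ifs <;> omega
lemma mex2_ne_right (a b : ℕ) : mex2 a b ≠ b := by unfold mex2; split_ifs <;> omega
lemma mex2_le2 (a b : ℕ) : mex2 a b ≤ 2 := by
  unfold mex2; split_ifs <;> omega
lemma mex2_zero_right (a : ℕ) : mex2 a 0 ≠ 0 := by unfold mex2; split_ifs <;> omega
lemma mex2_zero_left (b : ℕ) : mex2 0 b ≠ 0 := by unfold mex2; split_ifs <;> omega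
lemma mex2_eq0 (a b : ℕ) (ha : a ≠ 0) (hb : b ≠ 0) : mex2 a b = 0 := by
  unfold mex2; split_ifs <;> omega
lemma mex2_invol (v a : ℕ) (hv : v ≤ 2) (ha : a ≤ 2) (hav : a ≠ v) :
    mex2 (mex2 a v) v = a := by
  interval_cases v <;> interval_cases a <;> simp_all [mex2]
lemma mex2_final (v : ℕ) (hv : v ≤ 2) (h0 : v ≠ 0) : mex2 (mex2 0 v) 0 = v := by
  interval_cases v <;> simp_all [mex2]

lemma SG_step (d n : ℕ) (h : 2 ≤ n) :
    SG d n = mex2 (SG d (n - 1)) (SG d ((n + (2 * d - 1)) / (2 * d))) := by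
  obtain ⟨m, rfl⟩ : ∃ m, n = m + 2 := ⟨n - 2, by omega⟩
  rw [SG]
  congr 2 <;> omega

lemma sg_le2 (d n : ℕ) : SG d n ≤ 2 := by
  match n with
  | 0 => simp [SG]
  | 1 => simp [SG]
  | (m+2) => rw [SG]; exact mex2_le2 _ _

lemma blockstep (d i p : ℕ) (hd : 1 ≤ d) (hp1 : 1 ≤ p) (hpq : p ≤ 2 * d)
    (h2 : 2 ≤ 2 * d * i + p) :
    SG d (2 * d * i + p) = mex2 (SG d (2 * d * i + p - 1)) (SG d (i + 1)) := by
  rw [SG_step d _ h2]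
  congr 2
  have e : 2 * d * (i + 1) = 2 * d * i + 2 * d := by ring
  have e2 : 2 * d * i + p + (2 * d - 1) = 2 * d * (i + 1) + (p - 1) := by omega
  rw [e2, Nat.mul_add_div (by omega), Nat.div_eq_of_lt (by omega)]

lemma PAR2 (d i p : ℕ) (hd : 1 ≤ d) (hp1 : 1 ≤ p) (hpq : p + 2 ≤ 2 * d)
    (h2 : 2 ≤ 2 * d * i + p) :
    SG d (2 * d * i + p + 2) = SG d (2 * d * i + p) := by
  set v := SG d (i + 1) with hv
  have ha : SG d (2 * d * i + p) = mex2 (SG d (2 * d * i + p - 1)) v :=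
    blockstep d i p hd hp1 (by omega) h2
  have ha1 : SG d (2 * d * i + (p + 1)) = mex2 (SG d (2 * d * i + (p + 1) - 1)) v :=
    blockstep d i (p + 1) hd (by omega) (by omega) (by omega)
  have ha2 : SG d (2 * d * i + (p + 2)) = mex2 (SG d (2 * d * i + (p + 2) - 1)) v :=
    blockstep d i (p + 2) hd (by omega) (by omega) (by omega)
  have e1 : 2 * d * i + (p + 1) - 1 = 2 * d * i + p := by omega
  have e2 : 2 * d * i + (p + 2) - 1 = 2 * d * i + (p + 1) := by omega
  rw [e1] at ha1
  rw [e2, ha1] at ha2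
  have := mex2_invol v (SG d (2 * d * i + p)) (sg_le2 d _)
    (by rw [ha]; exact mex2_le2 _ _) (by rw [ha]; exact mex2_ne_right _ _)
  rw [show 2 * d * i + p + 2 = 2 * d * i + (p + 2) by omega, ha2, this]

lemma PAR_all (d : ℕ) (hd : 1 ≤ d) : ∀ k i p, 1 ≤ p → p + 2 * k ≤ 2 * d →
    2 ≤ 2 * d * i + p → SG d (2 * d * i + p + 2 * k) = SG d (2 * d * i + p) := by
  intro k
  induction k with
  | zero => intro i p _ _ _; norm_num
  | succ k ih =>
    intro i p hp1 hpk h2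
    have e : 2 * d * i + p + 2 * (k + 1) = 2 * d * i + (p + 2) + 2 * k := by ring
    rw [e, ih i (p + 2) (by omega) (by omega) (by omega)]
    exact PAR2 d i p hd hp1 (by omega) h2

lemma Bne0 (d : ℕ) (hd : 1 ≤ d) : ∀ i, SG d (2 * d * i + 2) ≠ 0 := by
  intro i
  induction i with
  | zero =>
    have h1 : (2 + (2 * d - 1)) / (2 * d) = 1 := by
      apply Nat.div_eq_of_lt_le <;> omega
    rw [show 2 * d * 0 + 2 = 2 by omega, SG_step d 2 (by omega), h1]
    rw [show SG d 1 = 0 from by rw [SG]]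
    simp [mex2]
  | succ i ih =>
    set v := SG d (i + 1 + 1) with hv
    have hstep2 : SG d (2 * d * (i + 1) + 2) = mex2 (SG d (2 * d * (i + 1) + 2 - 1)) v :=
      blockstep d (i + 1) 2 hd (by omega) (by omega) (by omega)
    by_cases hv0 : v = 0
    · rw [hstep2, hv0]; exact mex2_zero_right _
    · have e : 2 * d * (i + 1) = 2 * d * i + 2 * d := by ring
      have hstep1 : SG d (2 * d * (i + 1) + 1) = mex2 (SG d (2 * d * (i + 1) + 1 - 1)) v :=
        blockstep d (i + 1) 1 hd (by omega) (by omega) (by omega)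
      have hfull : SG d (2 * d * (i + 1)) = SG d (2 * d * i + 2) := by
        rw [show 2 * d * (i + 1) = 2 * d * i + 2 + 2 * (d - 1) from by omega]
        exact PAR_all d hd (d - 1) i 2 (by omega) (by omega) (by omega)
      have h10 : SG d (2 * d * (i + 1) + 1) = 0 := by
        rw [hstep1, show 2 * d * (i + 1) + 1 - 1 = 2 * d * (i + 1) from by omega, hfull]
        exact mex2_eq0 _ _ ih hv0
      rw [hstep2, show 2 * d * (i + 1) + 2 - 1 = 2 * d * (i + 1) + 1 from by omega, h10]
      exact mex2_zero_left _

lemma even_ne0 (d : ℕ) (hd : 1 ≤ d) (n : ℕ) (h2 : 2 ≤ n) (he : n % 2 = 0) :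
    SG d n ≠ 0 := by
  set i := (n - 1) / (2 * d) with hi
  set r := (n - 1) % (2 * d) with hr
  have hdm : 2 * d * i + r = n - 1 := Nat.div_add_mod (n - 1) (2 * d)
  have hrlt : r < 2 * d := Nat.mod_lt _ (by omega)
  have hpar : (2 * d * i) % 2 = 0 := by
    have : 2 * d * i = 2 * (d * i) := by ring
    omega
  -- n = 2*d*i + (r+1), with r+1 even, 2 ≤ r+1 ≤ 2*d
  have hn : n = 2 * d * i + (r + 1) := by omega
  have hre : (r + 1) % 2 = 0 := by omega
  have h1r : 1 ≤ r := by omega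
  rw [hn, show 2 * d * i + (r + 1) = 2 * d * i + 2 + 2 * ((r - 1) / 2) from by omega]
  rw [PAR_all d hd ((r - 1) / 2) i 2 (by omega) (by omega) (by omega)]
  exact Bne0 d hd i

theorem stmt_9 (d : ℕ) (hd : 1 ≤ d) (c₁ c₂ m : ℕ) (hm : 1 ≤ m)
    (h1 : Even c₁) (h2 : Odd c₂) (b1 : c₁ ≤ 2 * d - 1) (b2 : c₂ ≤ 2 * d - 1) :
    SG d (1 + 2 * d * c₁ + (2 * d) ^ 2 * c₂ + (2 * d) ^ 3 * m) =
      SG d (c₁ + 2 * d * c₂ + (2 * d) ^ 2 * m) := by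
  set K := c₁ + 2 * d * c₂ + (2 * d) ^ 2 * m with hK
  set L := c₂ + 2 * d * m with hL
  have hKL : K = c₁ + 2 * d * L := by rw [hK, hL]; ring
  have harg : 1 + 2 * d * c₁ + (2 * d) ^ 2 * c₂ + (2 * d) ^ 3 * m = 2 * d * K + 1 := by
    rw [hK]; ring
  rw [harg]
  -- basic numeric facts
  have h2dm : 2 * 1 ≤ 2 * d * m := Nat.mul_le_mul (by omega) hm
  have hc2 : c₂ % 2 = 1 := Nat.odd_iff.mp h2
  have hc1 : c₁ % 2 = 0 := Nat.even_iff.mp h1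
  have hdm2 : 2 * d * m = 2 * (d * m) := by ring
  have hLodd : L % 2 = 1 := by rw [hL]; omega
  have hL3 : 3 ≤ L := by rw [hL]; omega
  have hdL2 : 2 * d * L = 2 * (d * L) := by ring
  have hKeven : K % 2 = 0 := by rw [hKL]; omega
  have h2dL : 2 * 3 ≤ 2 * d * L := Nat.mul_le_mul (by omega) hL3
  have hK2 : 2 ≤ K := by omega
  have hLle : L ≤ 2 * d * L := Nat.le_mul_of_pos_left L (by omega)
  have hLK : 2 * d * L ≤ 2 * d * K := Nat.mul_le_mul (le_refl _) (by omega)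
  set v := SG d K with hv
  have hvne : v ≠ 0 := even_ne0 d hd K hK2 hKeven
  have hvle : v ≤ 2 := sg_le2 d K
  -- Step B : SG d (K+1) = 0
  obtain ⟨c, hc⟩ : ∃ c, c₁ = 2 * c := by
    obtain ⟨r, hr⟩ := h1; exact ⟨r, by omega⟩
  have hB : SG d (K + 1) = 0 := by
    have hidx : K + 1 = 2 * d * L + 1 + 2 * c := by omega
    rw [hidx, PAR_all d hd c L 1 le_rfl (by omega) (by omega)]
    have hbs : SG d (2 * d * L + 1) = mex2 (SG d (2 * d * L + 1 - 1)) (SG d (L + 1)) :=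
      blockstep d L 1 hd le_rfl (by omega) (by omega)
    rw [show 2 * d * L + 1 - 1 = 2 * d * L from by omega] at hbs
    rw [hbs]
    exact mex2_eq0 _ _ (even_ne0 d hd _ (by omega) (by omega))
      (even_ne0 d hd _ (by omega) (by omega))
  -- Step C : SG d (2*d*K) = mex2 0 v
  obtain ⟨K', hK'⟩ : ∃ K', K = K' + 1 := ⟨K - 1, by omega⟩
  have h2dK' : 2 * d * K = 2 * d * K' + 2 * d := by rw [hK']; ring
  have hdK'2 : 2 * d * K' = 2 * (d * K') := by ring
  have h2dK'2 : 2 * 1 ≤ 2 * d * K' := Nat.mul_le_mul (by omega) (by omega)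
  have hC : SG d (2 * d * K) = mex2 0 v := by
    rw [show 2 * d * K = 2 * d * K' + 2 + 2 * (d - 1) from by omega,
      PAR_all d hd (d - 1) K' 2 (by omega) (by omega) (by omega)]
    have hbs2 : SG d (2 * d * K' + 2) = mex2 (SG d (2 * d * K' + 2 - 1)) (SG d (K' + 1)) :=
      blockstep d K' 2 hd (by omega) (by omega) (by omega)
    have hbs1 : SG d (2 * d * K' + 1) = mex2 (SG d (2 * d * K' + 1 - 1)) (SG d (K' + 1)) :=
      blockstep d K' 1 hd (by omega) (by omega) (by omega)
    rw [show 2 * d * K' + 1 - 1 = 2 * d * K' from by omega] at hbs1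
    rw [show 2 * d * K' + 2 - 1 = 2 * d * K' + 1 from by omega] at hbs2
    have hz : SG d (2 * d * K' + 1) = 0 := by
      rw [hbs1, ← hK']
      exact mex2_eq0 _ _ (even_ne0 d hd _ (by omega) (by omega)) hvne
    rw [hbs2, hz, ← hK']
  -- Final assembly
  have hbs0 : SG d (2 * d * K + 1) = mex2 (SG d (2 * d * K + 1 - 1)) (SG d (K + 1)) :=
    blockstep d K 1 hd le_rfl (by omega) (by omega)
  rw [show 2 * d * K + 1 - 1 = 2 * d * K from by omega] at hbs0
  rw [hbs0, hB, hC]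
  exact mex2_final v hvle hvne
end

section
/- In the game G_{1,2d} with arbitrarily modified initial segment: if the first N-1 values x_1, ..., x_{N-1} are arbitrary elements of {0,1,2} and x_n = mex{x_{n-1}, x_{⌈n/(2d)⌉}} for n ≥ N, then for all even n ≥ 2dN, x_n ≠ 0. -/
lemma mex2_zero_iff (a b : ℕ) : mex2 a b = 0 ↔ a ≠ 0 ∧ b ≠ 0 := by
  constructor
  · intro h
    unfold mex2 at h
    split_ifs at h with h1 h2 h3
    exact ⟨h1.1.symm, h1.2.symm⟩
  · intro ⟨ha, hb⟩
    unfold mex2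
    rw [if_pos ⟨Ne.symm ha, Ne.symm hb⟩]

lemma ceil_div_eq (D k j : ℕ) (hD : 0 < D) (hk : 1 ≤ k) (h1 : D*(k-1) < j) (h2 : j ≤ D*k) :
    (j + (D-1))/D = k := by
  obtain ⟨c, rfl⟩ : ∃ c, k = c + 1 := ⟨k-1, by omega⟩
  have e1 : D*(c+1-1) = D*c := by norm_num
  rw [e1] at h1
  have e2 : D*(c+1) = D*c + D := by ring
  rw [e2] at h2
  apply Nat.div_eq_of_lt_le
  · calc (c+1)*D = D*c + D := by ring
    _ ≤ j + (D-1) := by omega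
  · calc j + (D-1) < D*c + D + D := by omega
    _ = (c+1+1)*D := by ring

lemma mulLe (D a b : ℕ) (h : a ≤ b) : D*a ≤ D*b := Nat.mul_le_mul (le_refl D) h

lemma mulLt (D a b : ℕ) (hD : 0 < D) (h : a < b) : D*a < D*b := by
  have h1 : D*(a+1) ≤ D*b := Nat.mul_le_mul (le_refl D) h
  have h2 : D*(a+1) = D*a + D := by ring
  linarith

theorem stmt_16 (d N : ℕ) (hd : 1 ≤ d) (hN : 2 ≤ N) (x : ℕ → ℕ)
    (hinit : ∀ i, 1 ≤ i → i ≤ N - 1 → x i ∈ ({0, 1, 2} : Set ℕ))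
    (hrec : ∀ n, N ≤ n → x n = mex2 (x (n - 1)) (x ((n + (2 * d - 1)) / (2 * d)))) :
    ∀ n, Even n → 2 * d * N ≤ n → x n ≠ 0 := by
  have hD : 0 < 2 * d := by omega
  -- F1: a zero value forces both arguments nonzero
  have F1 : ∀ j k, N ≤ j → 1 ≤ k → 2*d*(k-1) < j → j ≤ 2*d*k → x j = 0 →
      x (j-1) ≠ 0 ∧ x k ≠ 0 := by
    intro j k hj hk h1 h2 h0
    rw [hrec j hj, ceil_div_eq (2*d) k j hD hk h1 h2] at h0
    exact (mex2_zero_iff _ _).mp h0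
  -- F2: a nonzero value forces one argument zero
  have F2 : ∀ j k, N ≤ j → 1 ≤ k → 2*d*(k-1) < j → j ≤ 2*d*k → x j ≠ 0 →
      x (j-1) = 0 ∨ x k = 0 := by
    intro j k hj hk h1 h2 h0
    rw [hrec j hj, ceil_div_eq (2*d) k j hD hk h1 h2] at h0
    by_contra hc
    push_neg at hc
    exact h0 ((mex2_zero_iff _ _).mpr ⟨hc.1, hc.2⟩)
  -- facts about q = ⌈N/2d⌉
  set q := (N + (2*d-1))/(2*d) with hqdef
  have hq1 : 1 ≤ q := by
    rw [hqdef, Nat.one_le_div_iff hD]; omega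
  have hqN : N ≤ 2*d*q := by
    have hmod := Nat.div_add_mod (N + (2*d-1)) (2*d)
    have hr := Nat.mod_lt (N + (2*d-1)) hD
    rw [← hqdef] at hmod
    generalize 2*d*q = P at *
    omega
  have hqub : 2*d*(q-1) < N := by
    have h1 : q * (2*d) ≤ N + (2*d-1) := Nat.div_mul_le_self _ _
    have e0 : q - 1 + 1 = q := Nat.succ_pred_eq_of_pos hq1
    have e1 : 2*d*(q-1) + 2*d = 2*d*q := by
      calc 2*d*(q-1) + 2*d = 2*d*((q-1)+1) := by ring
      _ = 2*d*q := by rw [e0]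
    have e2 : q * (2*d) = 2*d*q := by ring
    rw [e2] at h1
    generalize 2*d*(q-1) = A at *
    generalize 2*d*q = B at *
    omega
  have hqN1 : q ≤ N - 1 := by
    have : q < N := by
      rw [hqdef]
      rw [Nat.div_lt_iff_lt_mul hD]
      have key : N + 2*d ≤ N * (2*d) := by
        obtain ⟨a, rfl⟩ : ∃ a, N = a + 2 := ⟨N-2, by omega⟩
        obtain ⟨b, rfl⟩ : ∃ b, d = b + 1 := ⟨d-1, by omega⟩
        nlinarith
      omega
    omega
  -- Lemma L: impossible that x (2d(N-1)) = 0 and x N ≠ 0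
  have L : ∀ _ : x (2*d*(N-1)) = 0, ∀ _ : x N ≠ 0, False := by
    intro HL0 HLN
    have hDN : N ≤ 2*d*(N-1) := by
      have h1 : 2*(N-1) ≤ 2*d*(N-1) := Nat.mul_le_mul (by omega) (le_refl _)
      omega
    have hxN1 : x (N-1) ≠ 0 := by
      refine (F1 (2*d*(N-1)) (N-1) hDN (by omega) ?_ (le_refl _) HL0).2
      exact mulLt (2*d) (N-1-1) (N-1) hD (by omega)
    have hq0 : x q = 0 := by
      rcases F2 N q (le_refl N) hq1 hqub hqN HLN with h | h
      · exact absurd h hxN1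
      · exact h
    -- crossing one block downward
    have cross : ∀ k, q ≤ k → x (2*d*(k+1)) = 0 → x (2*d*k) = 0 := by
      intro k hqk h0
      have hPk : N ≤ 2*d*k := le_trans hqN (mulLe (2*d) q k hqk)
      have hsplit : 2*d*(k+1) = 2*d*k + 2*d := by ring
      have hck : x (k+1) ≠ 0 := by
        refine (F1 (2*d*(k+1)) (k+1) ?_ (by omega) ?_ (le_refl _) h0).2
        · omega
        · have e : k+1-1 = k := by omega
          rw [e]; omega
      have inner : ∀ s, s ≤ d → x (2*d*(k+1) - 2*s) = 0 := by
        intro s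
        induction s with
        | zero => intro _; simpa using h0
        | succ s ih =>
          intro hs
          have hprev := ih (by omega)
          set j := 2*d*(k+1) - 2*s with hj
          have hjval : j = 2*d*k + 2*d - 2*s := by omega
          have hjN : N ≤ j := by omega
          have hjlb : 2*d*k < j := by omega
          have hjub : j ≤ 2*d*(k+1) := by omega
          have e : k+1-1 = k := by omega
          have step1 : x (j-1) ≠ 0 :=
            (F1 j (k+1) hjN (by omega) (by rw [e]; omega) hjub hprev).1
          have step2 : x (j-2) = 0 := by
            rcases F2 (j-1) (k+1) (by omega) (by omega) (by rw [e]; omega) (by omega) step1 with h | h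
            · simpa [Nat.sub_sub] using h
            · exact absurd h hck
          have e2 : j - 2 = 2*d*(k+1) - 2*(s+1) := by omega
          rw [← e2]
          exact step2
      have := inner d (le_refl d)
      have e3 : 2*d*(k+1) - 2*d = 2*d*k := by omega
      rwa [e3] at this
    -- chain down from N-1 to q
    have chain : ∀ t k, q ≤ k → k + t = N - 1 → x (2*d*k) = 0 := by
      intro t
      induction t with
      | zero => intro k _ hk; rw [show k = N - 1 by omega]; exact HL0
      | succ t ih =>
        intro k hqk hk
        exact cross k hqk (ih (k+1) (by omega) (by omega))
    have hfin : x (2*d*q) = 0 := chain (N-1-q) q (le_refl q) (by omega)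
    have : x q ≠ 0 := by
      refine (F1 (2*d*q) q hqN hq1 ?_ (le_refl _) hfin).2
      exact mulLt (2*d) (q-1) q hD (by omega)
    exact this hq0
  -- Main claim
  have M : ∀ j, 2*d*(N-1)+2 ≤ j → Even j → x j ≠ 0 := by
    intro j
    induction j using Nat.strong_induction_on with
    | _ j IH =>
      intro hj hev h0
      have h2N : 2*(N-1) ≤ 2*d*(N-1) := Nat.mul_le_mul (by omega) (le_refl _)
      have hjN : N ≤ j := by omega
      -- block index m of j
      set m := (j + (2*d-1))/(2*d) with hmdef
      have hmod := Nat.div_add_mod (j + (2*d-1)) (2*d)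
      have hr := Nat.mod_lt (j + (2*d-1)) hD
      rw [← hmdef] at hmod
      have hm1 : 1 ≤ m := by
        rw [hmdef, Nat.one_le_div_iff hD]; omega
      obtain ⟨m', hm'⟩ : ∃ m', m = m' + 1 := ⟨m-1, by omega⟩
      have hsplit : 2*d*m = 2*d*m' + 2*d := by rw [hm']; ring
      have hmlb : 2*d*m' < j := by
        generalize h : (j + (2*d-1)) % (2*d) = R at *
        omega
      have hmub : j ≤ 2*d*m := by
        generalize h : (j + (2*d-1)) % (2*d) = R at *
        omega
      have hmlb' : 2*d*(m-1) < j := by rw [hm']; simpa using hmlb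
      have hmN : N ≤ m := by
        have h1 : 2*d*(N-1) < 2*d*m := by omega
        have := Nat.lt_of_mul_lt_mul_left h1
        omega
      have hF := F1 j m hjN hm1 hmlb' hmub h0
      by_cases hcase : 2*d*m' + 4 ≤ j
      · -- interior of block: j-2 is an even zero, smaller, still in range
        have step1 : x (j-2) = 0 := by
          rcases F2 (j-1) m (by omega) hm1 (by rw [hm']; simpa using (by omega : 2*d*m' < j-1)) (by omega) hF.1 with h | h
          · simpa [Nat.sub_sub] using h
          · exact absurd h hF.2
        have hmono : 2*d*(N-1) ≤ 2*d*m' := mulLe (2*d) (N-1) m' (by omega)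
        refine IH (j-2) (by omega) (by omega) ?_ step1
        rcases hev with ⟨a, ha⟩
        exact ⟨a-1, by omega⟩
      · -- j = 2dm' + 2
        have hevm : Even (2*d*m') := ⟨d*m', by ring⟩
        have hjeq : j = 2*d*m' + 2 := by
          rcases hev with ⟨a, ha⟩
          rcases hevm with ⟨b, hb⟩
          omega
        have step1 : x (2*d*m') = 0 := by
          have h1 : x (j-1) ≠ 0 := hF.1
          rcases F2 (j-1) m (by omega) hm1 (by rw [hm']; simpa using (by omega : 2*d*m' < j-1)) (by omega) h1 with h | h
          · have e : j - 1 - 1 = 2*d*m' := by omega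
            rwa [e] at h
          · exact absurd h hF.2
        by_cases hmN' : m = N
        · -- bottom case: lemma L
          have e : 2*d*m' = 2*d*(N-1) := by
            rw [hm'] at hmN'
            congr 1
            omega
          rw [e] at step1
          have hxN : x N ≠ 0 := by rw [← hmN']; exact hF.2
          exact L step1 hxN
        · -- m ≥ N+1: use IH at 2dm'
          have hmono : 2*d*N ≤ 2*d*m' := mulLe (2*d) N m' (by omega)
          have hmono2 : 2*d*(N-1) + 2*d = 2*d*N := by
            obtain ⟨c, rfl⟩ : ∃ c, N = c + 1 := ⟨N-1, by omega⟩
            simp; ring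
          exact IH (2*d*m') (by omega) (by omega) hevm step1
  intro n hev hn
  have h1 : 2*d*(N-1) + 2*d = 2*d*N := by
    obtain ⟨c, rfl⟩ : ∃ c, N = c + 1 := ⟨N-1, by omega⟩
    simp; ring
  exact M n (by omega) hev
end
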